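/- If the period length D(√d) of the continued fraction expansion of √d is even, then D(n·√d) is even for every positive integer n. -/

import Mathlib

/-- Iteration of the Gauss-type map producing the complete quotients of the
continued fraction expansion of `α`. -/
noncomputable def cfIter (α : ℝ) : ℕ → ℝ
  | 0 => α
  | n + 1 => (Int.fract (cfIter α n))⁻¹

/-- The `n`-th partial quotient of the continued fraction of `α`. -/
noncomputable def cfTerm (α : ℝ) (n : ℕ) : ℤ := ⌊cfIter α n⌋

/-- `t` is an eventual period of the sequence `f`. -/
def EvPeriod (t : ℕ) (f : ℕ → ℤ) : Prop := ∃ N, ∀ n, N ≤ n → f (n + t) = f n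

/-- `periodLen α` is the length of the periodic part of the continued fraction
expansion of `α`: the least positive eventual period of its partial quotients. -/
noncomputable def periodLen (α : ℝ) : ℕ := sInf {t | 0 < t ∧ EvPeriod t (cfTerm α)}

lemma cfIter_add (α : ℝ) (k m : ℕ) : cfIter α (k + m) = cfIter (cfIter α k) m := by
  induction m with
  | zero => rfl
  | succ m ih => rw [← Nat.add_assoc]; simp only [cfIter, ih]

lemma cfTerm_add (α : ℝ) (k m : ℕ) : cfTerm α (k + m) = cfTerm (cfIter α k) m := by
  rw [cfTerm, cfTerm, cfIter_add]

lemma cfIter_congr {α β : ℝ} (h : cfIter α 1 = cfIter β 1) (m : ℕ) (hm : 1 ≤ m) :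
    cfIter α m = cfIter β m := by
  obtain ⟨s, rfl⟩ := Nat.exists_eq_add_of_le hm
  rw [cfIter_add α 1 s, cfIter_add β 1 s, h]

lemma EvPeriod.iterate {t : ℕ} {f : ℕ → ℤ} {N : ℕ} (h : ∀ n, N ≤ n → f (n + t) = f n)
    (c : ℕ) : ∀ n, N ≤ n → f (n + t * c) = f n := by
  induction c with
  | zero => simp
  | succ c ih =>
      intro n hn
      have : n + t * (c + 1) = (n + t * c) + t := by ring
      rw [this, h _ (le_trans hn (Nat.le_add_right _ _)), ih n hn]

lemma EvPeriod.gcd {s t : ℕ} {f : ℕ → ℤ} (hs : EvPeriod s f) (ht : EvPeriod t f) :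
    EvPeriod (Nat.gcd s t) f := by
  rcases Nat.eq_zero_or_pos s with rfl | hs0
  · simpa using ht
  rcases Nat.eq_zero_or_pos t with rfl | ht0
  · simpa using hs
  obtain ⟨Ns, hNs⟩ := hs
  obtain ⟨Nt, hNt⟩ := ht
  set g := Nat.gcd s t with hg
  set k : ℕ := (Nat.gcdA s t).natAbs + (Nat.gcdB s t).natAbs with hk
  have key : ∃ a b : ℕ, (g : ℤ) + t * b = s * a := by
    refine ⟨(Nat.gcdA s t + k * t).toNat, (k * s - Nat.gcdB s t).toNat, ?_⟩
    have e1 : ((Nat.gcdA s t).natAbs : ℤ) = |Nat.gcdA s t| := Int.natCast_natAbs _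
    have e2 : ((Nat.gcdB s t).natAbs : ℤ) = |Nat.gcdB s t| := Int.natCast_natAbs _
    have ht1 : (1:ℤ) ≤ t := by exact_mod_cast ht0
    have hs1 : (1:ℤ) ≤ s := by exact_mod_cast hs0
    have hkk : (k : ℤ) = ((Nat.gcdA s t).natAbs : ℤ) + ((Nat.gcdB s t).natAbs : ℤ) := by
      rw [hk]; push_cast; ring
    have h1 : (0:ℤ) ≤ Nat.gcdA s t + k * t := by
      nlinarith [neg_abs_le (Nat.gcdA s t), abs_nonneg (Nat.gcdA s t), abs_nonneg (Nat.gcdB s t)]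
    have h2 : (0:ℤ) ≤ k * s - Nat.gcdB s t := by
      nlinarith [le_abs_self (Nat.gcdB s t), abs_nonneg (Nat.gcdA s t), abs_nonneg (Nat.gcdB s t)]
    rw [Int.toNat_of_nonneg h1, Int.toNat_of_nonneg h2]
    have := Nat.gcd_eq_gcd_ab s t
    rw [hg]; rw [this]; ring
  obtain ⟨a, b, hab⟩ := key
  have habn : g + t * b = s * a := by exact_mod_cast hab
  refine ⟨max Ns Nt, fun n hn => ?_⟩
  have h1 : f (n + g + t * b) = f (n + g) :=
    EvPeriod.iterate hNt b _ (le_trans (le_max_right _ _) (le_trans hn (Nat.le_add_right _ _)))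
  have h2 : f (n + s * a) = f n :=
    EvPeriod.iterate hNs a _ (le_trans (le_max_left _ _) hn)
  have : n + g + t * b = n + s * a := by omega
  rw [← h1, this, h2]

lemma sInf_dvd_of_mem_periods {f : ℕ → ℤ} {t : ℕ}
    (ht : t ∈ {t | 0 < t ∧ EvPeriod t f}) :
    sInf {t | 0 < t ∧ EvPeriod t f} ∣ t := by
  set S := {t | 0 < t ∧ EvPeriod t f} with hS
  have hne : S.Nonempty := ⟨t, ht⟩
  have hmem := Nat.sInf_mem hne
  set L := sInf S with hL
  have hgcd : Nat.gcd L t ∈ S := by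
    refine ⟨Nat.gcd_pos_of_pos_left _ hmem.1, EvPeriod.gcd hmem.2 ht.2⟩
  have h1 : L ≤ Nat.gcd L t := Nat.sInf_le hgcd
  have h2 : Nat.gcd L t ∣ L := Nat.gcd_dvd_left _ _
  have h4 : Nat.gcd L t = L := le_antisymm (Nat.le_of_dvd hmem.1 h2) h1
  exact h4 ▸ Nat.gcd_dvd_right L t

lemma cfIter_succ (α : ℝ) (n : ℕ) : cfIter α (n + 1) = (Int.fract (cfIter α n))⁻¹ := rfl

lemma fract_pos_of_irrational {α : ℝ} (h : Irrational α) : 0 < Int.fract α := by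
  rcases lt_or_eq_of_le (Int.fract_nonneg α) with h' | h'
  · exact h'
  · exfalso
    have : α = (⌊α⌋ : ℝ) := by
      have := Int.fract_add_floor α
      rw [← h'] at this; linarith [this]
    exact (h.ne_int ⌊α⌋) this

lemma cf_determinism {x y : ℝ} (hd : ∀ m, cfTerm x m = cfTerm y m)
    (h1 : ∀ m, 1 ≤ cfTerm x m)
    (hx : ∀ m, Irrational (cfIter x m)) (hy : ∀ m, Irrational (cfIter y m)) : x = y := by
  set X := cfIter x with hX
  set Y := cfIter y with hY
  have hdy : ∀ m, 1 ≤ cfTerm y m := fun m => (hd m) ▸ h1 m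
  -- basic step facts
  have fx : ∀ m, 0 < Int.fract (X m) := fun m => fract_pos_of_irrational (hx m)
  have fy : ∀ m, 0 < Int.fract (Y m) := fun m => fract_pos_of_irrational (hy m)
  have gx : ∀ m, 1 < X (m + 1) := by
    intro m
    rw [hX, cfIter_succ]
    rw [one_lt_inv_iff₀]
    exact ⟨fx m, Int.fract_lt_one _⟩
  have gy : ∀ m, 1 < Y (m + 1) := by
    intro m
    rw [hY, cfIter_succ]
    rw [one_lt_inv_iff₀]
    exact ⟨fy m, Int.fract_lt_one _⟩
  have ex : ∀ m, X m = (cfTerm x m : ℝ) + (X (m + 1))⁻¹ := by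
    intro m
    rw [hX, cfIter_succ, inv_inv, cfTerm]
    linarith [Int.floor_add_fract (cfIter x m)]
  have ey : ∀ m, Y m = (cfTerm y m : ℝ) + (Y (m + 1))⁻¹ := by
    intro m
    rw [hY, cfIter_succ, inv_inv, cfTerm]
    linarith [Int.floor_add_fract (cfIter y m)]
  set E : ℕ → ℝ := fun m => |X m - Y m| with hE
  have contr : ∀ m, E (m + 1) = E m * (X (m + 1) * Y (m + 1)) := by
    intro m
    have hXm := ex m; have hYm := ey m
    have hxy : X m - Y m = (X (m+1))⁻¹ - (Y (m+1))⁻¹ := by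
      rw [hXm, hYm, hd m]; ring
    have hpx : (0:ℝ) < X (m+1) := lt_trans one_pos (gx m)
    have hpy : (0:ℝ) < Y (m+1) := lt_trans one_pos (gy m)
    have : (X (m+1))⁻¹ - (Y (m+1))⁻¹ = (Y (m+1) - X (m+1)) / (X (m+1) * Y (m+1)) := by
      field_simp
    rw [hE]
    simp only
    rw [hxy, this, abs_div, abs_of_pos (mul_pos hpx hpy), abs_sub_comm]
    field_simp
  have elt1 : ∀ m, E m < 1 := by
    intro m
    have h1x := Int.floor_le (X m)
    have h2x := Int.lt_floor_add_one (X m)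
    have h1y := Int.floor_le (Y m)
    have h2y := Int.lt_floor_add_one (Y m)
    have hde : (⌊X m⌋ : ℝ) = (⌊Y m⌋ : ℝ) := by
      have := hd m; rw [cfTerm, cfTerm] at this; exact_mod_cast this
    rw [hE]; simp only [abs_sub_lt_iff]
    constructor <;> linarith
  have four : ∀ m, 4 * E m ≤ E (m + 2) := by
    intro m
    have c1 := contr m
    have c2 := contr (m + 1)
    have b1 : 1 + (X (m+2))⁻¹ ≤ X (m+1) := by
      have := ex (m+1)
      have h1' : (1:ℝ) ≤ (cfTerm x (m+1) : ℝ) := by exact_mod_cast h1 (m+1)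
      linarith
    have b1y : 1 + (Y (m+2))⁻¹ ≤ Y (m+1) := by
      have := ey (m+1)
      have h1' : (1:ℝ) ≤ (cfTerm y (m+1) : ℝ) := by exact_mod_cast hdy (m+1)
      linarith
    have hx2 := gx (m+2 - 1); have hy2 := gy (m+1)
    have hx2' : 1 < X (m + 2) := gx (m+1)
    have hy2' : 1 < Y (m + 2) := gy (m+1)
    have hx1 : 1 < X (m+1) := gx m
    have hy1 : 1 < Y (m+1) := gy m
    have p1 : 2 ≤ X (m+1) * X (m+2) := by
      have hpos : (0:ℝ) < X (m+2) := lt_trans one_pos hx2'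
      have := mul_le_mul_of_nonneg_right b1 (le_of_lt hpos)
      have hinv : (X (m+2))⁻¹ * X (m+2) = 1 := inv_mul_cancel₀ (ne_of_gt hpos)
      nlinarith
    have p2 : 2 ≤ Y (m+1) * Y (m+2) := by
      have hpos : (0:ℝ) < Y (m+2) := lt_trans one_pos hy2'
      have := mul_le_mul_of_nonneg_right b1y (le_of_lt hpos)
      have hinv : (Y (m+2))⁻¹ * Y (m+2) = 1 := inv_mul_cancel₀ (ne_of_gt hpos)
      nlinarith
    have hEnn : 0 ≤ E m := abs_nonneg _
    have : E (m + 2) = E m * ((X (m+1) * X (m+2)) * (Y (m+1) * Y (m+2))) := by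
      rw [c2, c1]; ring
    rw [this]
    have p3 : (4:ℝ) ≤ (X (m+1) * X (m+2)) * (Y (m+1) * Y (m+2)) := by nlinarith
    nlinarith [mul_le_mul_of_nonneg_left p3 hEnn]
  have geo : ∀ n, 4 ^ n * E 0 ≤ E (2 * n) := by
    intro n
    induction n with
    | zero => simp
    | succ n ih =>
        have h4 := four (2 * n)
        have : (2 : ℕ) * (n + 1) = 2 * n + 2 := by ring
        rw [this, pow_succ]
        have hEnn : 0 ≤ E 0 := abs_nonneg _
        nlinarith
  have hE0 : E 0 = 0 := by
    by_contra hne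
    have hpos : 0 < E 0 := lt_of_le_of_ne (abs_nonneg _) (Ne.symm hne)
    obtain ⟨n, hn⟩ := pow_unbounded_of_one_lt ((1 : ℝ) / E 0) (by norm_num : (1:ℝ) < 4)
    have := geo n
    have := elt1 (2 * n)
    have : (1:ℝ) / E 0 * E 0 < 4 ^ n * E 0 := by
      apply mul_lt_mul_of_pos_right hn hpos
    rw [div_mul_cancel₀ 1 (ne_of_gt hpos)] at this
    nlinarith [geo n, elt1 (2 * n)]
  have : X 0 = Y 0 := by
    have := abs_eq_zero.mp hE0
    linarith [sub_eq_zero.mp this]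
  exact this

section Surd

variable {N : ℕ}

lemma sqrt_ne_intsq (hIrr : Irrational (Real.sqrt N)) (z : ℤ) : ((z : ℝ))^2 ≠ (N : ℝ) := by
  intro h
  have h0 : (0:ℝ) ≤ ((z:ℝ))^2 := sq_nonneg _
  have : Real.sqrt ((z:ℝ)^2) = Real.sqrt N := by rw [h]
  rw [Real.sqrt_sq_eq_abs] at this
  have : Real.sqrt N = ((|z| : ℤ) : ℝ) := by rw [← this]; push_cast; ring
  exact hIrr.ne_int _ this

lemma irr_aff (hIrr : Irrational (Real.sqrt N)) (P Q : ℤ) (hQ : Q ≠ 0) :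
    Irrational (((P : ℝ) + Real.sqrt N) / (Q : ℝ)) := by
  have h1 : Irrational ((P : ℝ) + Real.sqrt N) := hIrr.intCast_add P
  simpa [div_eq_mul_inv] using h1.div_intCast hQ

/-- The (P,Q) data of the complete quotients of `√N`. -/
noncomputable def PQ (N : ℕ) : ℕ → ℤ × ℤ
  | 0 => (0, 1)
  | k + 1 =>
    let p := PQ N k
    let a : ℤ := ⌊((p.1 : ℝ) + Real.sqrt N) / (p.2 : ℝ)⌋
    let P' := a * p.2 - p.1
    (P', ((N : ℤ) - P' ^ 2) / p.2)

lemma PQ_zero (N : ℕ) : PQ N 0 = (0, 1) := rfl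

lemma PQ_main (hIrr : Irrational (Real.sqrt N)) : ∀ k,
    (PQ N k).2 ≠ 0 ∧
    cfIter (Real.sqrt N) k = (((PQ N k).1 : ℝ) + Real.sqrt N) / ((PQ N k).2 : ℝ) ∧
    (PQ N k).2 ∣ ((N : ℤ) - (PQ N k).1 ^ 2) := by
  intro k
  induction k with
  | zero =>
      refine ⟨one_ne_zero, ?_, ?_⟩
      · simp [PQ_zero, cfIter]
      · simp [PQ_zero]
  | succ k ih =>
      obtain ⟨hQ, hrep, hdvd⟩ := ih
      set P : ℤ := (PQ N k).1
      set Q : ℤ := (PQ N k).2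
      set a : ℤ := ⌊((P : ℝ) + Real.sqrt N) / (Q : ℝ)⌋ with ha
      set P' : ℤ := a * Q - P with hP'
      have hPQsucc : PQ N (k+1) = (P', ((N:ℤ) - P'^2) / Q) := by
        show (let p := PQ N k;
          let a : ℤ := ⌊((p.1 : ℝ) + Real.sqrt N) / (p.2 : ℝ)⌋;
          let P' := a * p.2 - p.1;
          (P', ((N : ℤ) - P' ^ 2) / p.2)) = _
      
        rfl
      have hdvd' : Q ∣ ((N:ℤ) - P'^2) := by
        have : (N:ℤ) - P'^2 = ((N:ℤ) - P^2) + Q * (2*a*P - a^2*Q) := by rw [hP']; ring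
        rw [this]
        exact dvd_add hdvd (Dvd.intro _ rfl)
      set Q' : ℤ := ((N:ℤ) - P'^2) / Q with hQ'
      have hQQ' : Q * Q' = (N:ℤ) - P'^2 := Int.mul_ediv_cancel' hdvd'
      have hQ'ne : Q' ≠ 0 := by
        intro h0
        apply sqrt_ne_intsq hIrr P'
        have : (N:ℤ) = P'^2 := by
          have := hQQ'; rw [h0, mul_zero] at this; linarith
        exact_mod_cast congrArg (fun z : ℤ => (z:ℝ)) this.symm
      refine ⟨by rw [hPQsucc]; exact hQ'ne, ?_, ?_⟩
      · -- the real computation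
        have hQR : (Q : ℝ) ≠ 0 := Int.cast_ne_zero.mpr hQ
        have hQ'R : (Q' : ℝ) ≠ 0 := Int.cast_ne_zero.mpr hQ'ne
        have hfr : Int.fract (cfIter (Real.sqrt N) k) = (Real.sqrt N - (P' : ℝ)) / (Q : ℝ) := by
          rw [Int.fract, hrep]
          have : ⌊(((P : ℤ) : ℝ) + Real.sqrt N) / ((Q : ℤ) : ℝ)⌋ = a := rfl
          rw [this, hP']
          push_cast
          field_simp
          ring
        have hne : Real.sqrt N - (P' : ℝ) ≠ 0 := by
          intro h0
          apply sqrt_ne_intsq hIrr P'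
          have : Real.sqrt N = (P' : ℝ) := by linarith
          rw [← this]
          rw [sq]
          exact Real.mul_self_sqrt (by positivity)
        rw [cfIter_succ, hfr, hPQsucc]
        show ((Real.sqrt N - (P':ℝ))/(Q:ℝ))⁻¹ = ((P' : ℝ) + Real.sqrt N) / ((Q' : ℝ))
        have hQQ'R : (Q : ℝ) * (Q' : ℝ) = (N : ℝ) - (P' : ℝ)^2 := by exact_mod_cast hQQ'
        rw [inv_div]
        rw [div_eq_div_iff hne hQ'R]
        nlinarith [Real.sq_sqrt (show (0:ℝ) ≤ (N:ℝ) by positivity)]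
      · rw [hPQsucc]
        show Q' ∣ ((N:ℤ) - P'^2)
        exact ⟨Q, by linarith [hQQ']⟩

lemma cfTerm_eq_a (hIrr : Irrational (Real.sqrt N)) (k : ℕ) :
    cfTerm (Real.sqrt N) k = ⌊(((PQ N k).1 : ℝ) + Real.sqrt N) / ((PQ N k).2 : ℝ)⌋ := by
  rw [cfTerm, (PQ_main hIrr k).2.1]

lemma PQ_succ_eq (hIrr : Irrational (Real.sqrt N)) (k : ℕ) :
    (PQ N (k+1)).1 = cfTerm (Real.sqrt N) k * (PQ N k).2 - (PQ N k).1 := by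
  rw [cfTerm_eq_a hIrr]
  rfl

lemma PQ_succ_QQ (hIrr : Irrational (Real.sqrt N)) (k : ℕ) :
    (PQ N k).2 * (PQ N (k+1)).2 = (N : ℤ) - (PQ N (k+1)).1 ^ 2 := by
  have hdvd : (PQ N k).2 ∣ ((N : ℤ) - (PQ N (k+1)).1 ^ 2) := by
    have h1 := (PQ_main hIrr k).2.2
    have h2 : (PQ N (k+1)).1 = ⌊(((PQ N k).1 : ℝ) + Real.sqrt N) / ((PQ N k).2 : ℝ)⌋ * (PQ N k).2 - (PQ N k).1 := rfl
    set a : ℤ := ⌊(((PQ N k).1 : ℝ) + Real.sqrt N) / ((PQ N k).2 : ℝ)⌋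
    have : (N:ℤ) - (PQ N (k+1)).1^2 = ((N:ℤ) - (PQ N k).1^2) + (PQ N k).2 * (2*a*(PQ N k).1 - a^2*(PQ N k).2) := by
      rw [h2]; ring
    rw [this]
    exact dvd_add h1 (Dvd.intro _ rfl)
  have h3 : (PQ N (k+1)).2 = ((N : ℤ) - (PQ N (k+1)).1 ^ 2) / (PQ N k).2 := rfl
  rw [h3]
  exact Int.mul_ediv_cancel' hdvd

/-- conjugate of the k-th complete quotient -/
noncomputable def Cj (N : ℕ) (k : ℕ) : ℝ := (((PQ N k).1 : ℝ) - Real.sqrt N) / ((PQ N k).2 : ℝ)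

lemma sqrt_pos' (hN2 : 2 ≤ N) : 1 < Real.sqrt N := by
  have : Real.sqrt 1 < Real.sqrt N := by
    apply Real.sqrt_lt_sqrt (by norm_num)
    exact_mod_cast (by exact_mod_cast hN2 : (2:ℝ) ≤ N) |> lt_of_lt_of_le one_lt_two
  simpa using this

lemma cfIter_irr (hIrr : Irrational (Real.sqrt N)) (k : ℕ) :
    Irrational (cfIter (Real.sqrt N) k) := by
  rw [(PQ_main hIrr k).2.1]
  exact irr_aff hIrr _ _ (PQ_main hIrr k).1

lemma cfIter_gt_one (hIrr : Irrational (Real.sqrt N)) (k : ℕ) :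
    1 < cfIter (Real.sqrt N) (k + 1) := by
  rw [cfIter_succ]
  rw [one_lt_inv_iff₀]
  exact ⟨fract_pos_of_irrational (cfIter_irr hIrr k), Int.fract_lt_one _⟩

lemma cfTerm_pos (hIrr : Irrational (Real.sqrt N)) (k : ℕ) :
    1 ≤ cfTerm (Real.sqrt N) (k + 1) := by
  rw [cfTerm]
  exact Int.le_floor.mpr (by exact_mod_cast (cfIter_gt_one hIrr k).le)

lemma cfTerm_zero_pos (hIrr : Irrational (Real.sqrt N)) (hN2 : 2 ≤ N) :
    1 ≤ cfTerm (Real.sqrt N) 0 := by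
  rw [cfTerm]
  exact Int.le_floor.mpr (by exact_mod_cast (sqrt_pos' hN2).le)

lemma neg_inv_bounds {x : ℝ} (h : x < -1) : -1 < x⁻¹ ∧ x⁻¹ < 0 := by
  have hx0 : x < 0 := lt_trans h (by norm_num)
  have hinv : x * x⁻¹ = 1 := mul_inv_cancel₀ (ne_of_lt hx0)
  constructor
  · nlinarith [inv_neg''.mpr hx0]
  · exact inv_neg''.mpr hx0

lemma Cj_succ (hIrr : Irrational (Real.sqrt N)) (k : ℕ) :
    Cj N (k+1) = (Cj N k - (cfTerm (Real.sqrt N) k : ℝ))⁻¹ := by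
  set P : ℤ := (PQ N k).1
  set Q : ℤ := (PQ N k).2
  set P' : ℤ := (PQ N (k+1)).1
  set Q' : ℤ := (PQ N (k+1)).2
  have hQ : Q ≠ 0 := (PQ_main hIrr k).1
  have hQ' : Q' ≠ 0 := (PQ_main hIrr (k+1)).1
  have hQR : (Q : ℝ) ≠ 0 := Int.cast_ne_zero.mpr hQ
  have hQ'R : (Q' : ℝ) ≠ 0 := Int.cast_ne_zero.mpr hQ'
  have ha : P' = cfTerm (Real.sqrt N) k * Q - P := PQ_succ_eq hIrr k
  have hQQ' : Q * Q' = (N : ℤ) - P' ^ 2 := PQ_succ_QQ hIrr k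
  have hQQ'R : (Q : ℝ) * (Q' : ℝ) = (N : ℝ) - (P' : ℝ)^2 := by exact_mod_cast hQQ'
  set a : ℤ := cfTerm (Real.sqrt N) k
  have haR : (P' : ℝ) = (a : ℝ) * Q - P := by exact_mod_cast ha
  have hdiff : Cj N k - (a : ℝ) = -((P' : ℝ) + Real.sqrt N) / (Q : ℝ) := by
    rw [Cj, haR]
    rw [eq_div_iff hQR, sub_mul, div_mul_cancel₀ _ hQR]
    ring
  rw [hdiff]
  have hPn : (P' : ℝ) + Real.sqrt N ≠ 0 := by
    intro h0
    apply sqrt_ne_intsq hIrr P'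
    have : Real.sqrt N = -(P' : ℝ) := by linarith
    have h2 : (N : ℝ) = ((-(P':ℝ)))^2 := by
      rw [← this, sq]
      exact (Real.mul_self_sqrt (by positivity)).symm
    rw [h2]; ring
  rw [Cj, inv_div]
  show ((P':ℝ) - Real.sqrt N)/(Q':ℝ) = (Q:ℝ) / (-((P':ℝ) + Real.sqrt N))
  rw [div_eq_div_iff hQ'R (neg_ne_zero.mpr hPn)]
  have hsq : Real.sqrt N * Real.sqrt N = (N:ℝ) := Real.mul_self_sqrt (by positivity)
  nlinarith [hsq, hQQ'R]

lemma Cj_bounds (hIrr : Irrational (Real.sqrt N)) (hN2 : 2 ≤ N) (k : ℕ) :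
    -1 < Cj N (k+1) ∧ Cj N (k+1) < 0 := by
  induction k with
  | zero =>
      have h0 : Cj N 0 = -Real.sqrt N := by
        rw [Cj, PQ_zero]; push_cast; simp
      have ha0 : (1 : ℤ) ≤ cfTerm (Real.sqrt N) 0 := cfTerm_zero_pos hIrr hN2
      have : Cj N 0 - (cfTerm (Real.sqrt N) 0 : ℝ) < -1 := by
        have : (1:ℝ) ≤ (cfTerm (Real.sqrt N) 0 : ℝ) := by exact_mod_cast ha0
        have hs := sqrt_pos' hN2
        rw [h0]; linarith
      rw [Cj_succ hIrr 0]
      exact neg_inv_bounds this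
  | succ k ih =>
      have ha : (1:ℝ) ≤ (cfTerm (Real.sqrt N) (k+1) : ℝ) := by
        exact_mod_cast cfTerm_pos hIrr k
      have : Cj N (k+1) - (cfTerm (Real.sqrt N) (k+1) : ℝ) < -1 := by linarith [ih.2]
      rw [Cj_succ hIrr (k+1)]
      exact neg_inv_bounds this

lemma rep_unique (hIrr : Irrational (Real.sqrt N)) {P Q P' Q' : ℤ} (hQ : Q ≠ 0) (hQ' : Q' ≠ 0)
    (h : ((P:ℝ) + Real.sqrt N)/(Q:ℝ) = ((P':ℝ) + Real.sqrt N)/(Q':ℝ)) : P = P' ∧ Q = Q' := by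
  have hQR : (Q:ℝ) ≠ 0 := Int.cast_ne_zero.mpr hQ
  have hQ'R : (Q':ℝ) ≠ 0 := Int.cast_ne_zero.mpr hQ'
  rw [div_eq_div_iff hQR hQ'R] at h
  have hQQ : Q = Q' := by
    by_contra hne
    have hne' : ((Q' - Q : ℤ):ℝ) ≠ 0 := by
      push_cast
      intro h0
      have h0' : (Q:ℝ) = (Q':ℝ) := by linarith
      exact hne (by exact_mod_cast h0')
    have hval : Real.sqrt N * ((Q' - Q : ℤ):ℝ) = ((P' * Q - P * Q' : ℤ):ℝ) := by
      push_cast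
      nlinarith [h]
    have hv2 : Real.sqrt N = ((P' * Q - P * Q' : ℤ):ℝ) / ((Q' - Q : ℤ):ℝ) := by
      rw [eq_div_iff hne']
      exact hval
    have : Real.sqrt N = (((P' * Q - P * Q' : ℤ) : ℚ) / ((Q' - Q : ℤ) : ℚ) : ℚ) := by
      rw [hv2]; push_cast; ring
    exact (Rat.not_irrational _) (this ▸ hIrr)
  refine ⟨?_, hQQ⟩
  rw [hQQ] at h
  have : (P:ℝ) = (P':ℝ) := by
    have := mul_right_cancel₀ hQ'R h
    linarith
  exact_mod_cast this

lemma PQ_red (hIrr : Irrational (Real.sqrt N)) (hN2 : 2 ≤ N) (k : ℕ) :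
    0 < (PQ N (k+1)).2 ∧ 0 < (PQ N (k+1)).1 ∧
    (((PQ N (k+1)).1:ℝ) < Real.sqrt N) ∧
    (Real.sqrt N - ((PQ N (k+1)).2:ℝ) < ((PQ N (k+1)).1:ℝ)) := by
  have hQZ : (PQ N (k+1)).2 ≠ 0 := (PQ_main hIrr (k+1)).1
  have halpha : 1 < (((PQ N (k+1)).1:ℝ) + Real.sqrt N)/((PQ N (k+1)).2:ℝ) := by
    have := cfIter_gt_one hIrr k
    rwa [(PQ_main hIrr (k+1)).2.1] at this
  obtain ⟨hcj1, hcj2⟩ := Cj_bounds hIrr hN2 k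
  rw [Cj] at hcj1 hcj2
  have hSpos : (1:ℝ) < Real.sqrt N := sqrt_pos' hN2
  rcases hE : PQ N (k+1) with ⟨P, Q⟩
  rw [hE] at hQZ halpha hcj1 hcj2
  simp only at halpha hcj1 hcj2 hQZ ⊢
  have hQR : (Q:ℝ) ≠ 0 := Int.cast_ne_zero.mpr hQZ
  have hQpos : (0:ℝ) < (Q:ℝ) := by
    rcases lt_or_gt_of_ne hQR with hneg | hpos
    · exfalso
      have h1 : 0 < ((P:ℝ) + Real.sqrt N)/(Q:ℝ) := lt_trans one_pos halpha
      rcases div_pos_iff.mp h1 with ⟨_, hc⟩ | ⟨hnum, _⟩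
      · linarith
      · rcases div_neg_iff.mp hcj2 with ⟨ha, hb⟩ | ⟨ha, hb⟩
        · linarith
        · linarith
    · exact hpos
  have hPub : (P:ℝ) < Real.sqrt N := by
    rcases div_neg_iff.mp hcj2 with ⟨_, hb⟩ | ⟨ha, _⟩
    · linarith
    · linarith
  have hPlb : Real.sqrt N - (Q:ℝ) < (P:ℝ) := by
    have := (lt_div_iff₀ hQpos).mp hcj1
    linarith
  have hPQS : (Q:ℝ) < (P:ℝ) + Real.sqrt N := by
    have := (one_lt_div hQpos).mp halpha
    linarith
  refine ⟨by exact_mod_cast hQpos, ?_, hPub, hPlb⟩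
  have : (0:ℝ) < (P:ℝ) := by linarith
  exact_mod_cast this

lemma PQ_Qlt (hIrr : Irrational (Real.sqrt N)) (hN2 : 2 ≤ N) (k : ℕ) :
    ((PQ N (k+1)).2 : ℝ) < 2 * Real.sqrt N := by
  have halpha : 1 < (((PQ N (k+1)).1:ℝ) + Real.sqrt N)/((PQ N (k+1)).2:ℝ) := by
    have := cfIter_gt_one hIrr k
    rwa [(PQ_main hIrr (k+1)).2.1] at this
  obtain ⟨hQpos, hPpos, hPub, hPlb⟩ := PQ_red hIrr hN2 k
  have hQRpos : (0:ℝ) < ((PQ N (k+1)).2:ℝ) := by exact_mod_cast hQpos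
  have := (one_lt_div hQRpos).mp halpha
  linarith

lemma PQ_box (hIrr : Irrational (Real.sqrt N)) (hN2 : 2 ≤ N) (k : ℕ) :
    (PQ N (k+1)).1 ∈ Finset.Icc 1 (cfTerm (Real.sqrt N) 0) ∧
    (PQ N (k+1)).2 ∈ Finset.Icc 1 (2 * cfTerm (Real.sqrt N) 0 + 1) := by
  obtain ⟨hQpos, hPpos, hPub, hPlb⟩ := PQ_red hIrr hN2 k
  have hQlt := PQ_Qlt hIrr hN2 k
  have hfl : cfTerm (Real.sqrt N) 0 = ⌊Real.sqrt N⌋ := rfl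
  have h1 : ((cfTerm (Real.sqrt N) 0 : ℤ):ℝ) ≤ Real.sqrt N := hfl ▸ Int.floor_le _
  have h2 : Real.sqrt N < ((cfTerm (Real.sqrt N) 0 : ℤ):ℝ) + 1 := hfl ▸ Int.lt_floor_add_one _
  constructor
  · rw [Finset.mem_Icc]
    refine ⟨hPpos, ?_⟩
    have : ((PQ N (k+1)).1:ℝ) < ((cfTerm (Real.sqrt N) 0 + 1 : ℤ):ℝ) := by push_cast; linarith
    have := Int.cast_lt.mp this
    omega
  · rw [Finset.mem_Icc]
    refine ⟨hQpos, ?_⟩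
    have : ((PQ N (k+1)).2:ℝ) < ((2 * cfTerm (Real.sqrt N) 0 + 2 : ℤ):ℝ) := by push_cast; linarith
    have := Int.cast_lt.mp this
    omega

lemma exists_rep_eq (hIrr : Irrational (Real.sqrt N)) (hN2 : 2 ≤ N) :
    ∃ i j : ℕ, i < j ∧ PQ N (i+1) = PQ N (j+1) := by
  classical
  set box := (Finset.Icc (1:ℤ) (cfTerm (Real.sqrt N) 0)) ×ˢ
    (Finset.Icc (1:ℤ) (2 * cfTerm (Real.sqrt N) 0 + 1)) with hbox
  have hf : ∀ k : ℕ, PQ N (k+1) ∈ box := by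
    intro k
    rw [hbox, Finset.mem_product]
    exact PQ_box hIrr hN2 k
  let g : ℕ → {x // x ∈ box} := fun k => ⟨PQ N (k+1), hf k⟩
  obtain ⟨i, j, hne, heq⟩ := Finite.exists_ne_map_eq_of_infinite g
  have hval : PQ N (i+1) = PQ N (j+1) := congrArg Subtype.val heq
  rcases lt_or_gt_of_ne hne with h | h
  · exact ⟨i, j, h, hval⟩
  · exact ⟨j, i, h, hval.symm⟩

lemma Snonempty (hIrr : Irrational (Real.sqrt N)) (hN2 : 2 ≤ N) :
    {t | 0 < t ∧ EvPeriod t (cfTerm (Real.sqrt N))}.Nonempty := by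
  obtain ⟨i, j, hij, heq⟩ := exists_rep_eq hIrr hN2
  refine ⟨j - i, ⟨by omega, ⟨i + 1, fun n hn => ?_⟩⟩⟩
  obtain ⟨s, rfl⟩ := Nat.exists_eq_add_of_le hn
  have hiter : cfIter (Real.sqrt N) (i+1) = cfIter (Real.sqrt N) (j+1) := by
    rw [(PQ_main hIrr (i+1)).2.1, (PQ_main hIrr (j+1)).2.1, heq]
  have h1 : i + 1 + s + (j - i) = (j + 1) + s := by omega
  rw [h1, cfTerm_add _ (j+1) s, ← hiter, ← cfTerm_add]

lemma periodLen_mem (hIrr : Irrational (Real.sqrt N)) (hN2 : 2 ≤ N) :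
    0 < periodLen (Real.sqrt N) ∧ EvPeriod (periodLen (Real.sqrt N)) (cfTerm (Real.sqrt N)) :=
  Nat.sInf_mem (Snonempty hIrr hN2)

lemma alpha_eq_of_term_eq (hIrr : Irrational (Real.sqrt N)) {i j : ℕ} (hi : 1 ≤ i) (hj : 1 ≤ j)
    (h : ∀ m, cfTerm (Real.sqrt N) (i+m) = cfTerm (Real.sqrt N) (j+m)) :
    cfIter (Real.sqrt N) i = cfIter (Real.sqrt N) j := by
  apply cf_determinism (x := cfIter (Real.sqrt N) i) (y := cfIter (Real.sqrt N) j)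
  · intro m
    rw [← cfTerm_add, ← cfTerm_add]
    exact h m
  · intro m
    rw [← cfTerm_add]
    obtain ⟨i', rfl⟩ := Nat.exists_eq_add_of_le hi
    have : 1 + i' + m = (i' + m) + 1 := by omega
    rw [this]
    exact cfTerm_pos hIrr _
  · intro m
    rw [← cfIter_add]
    exact cfIter_irr hIrr _
  · intro m
    rw [← cfIter_add]
    exact cfIter_irr hIrr _

lemma step_back (hIrr : Irrational (Real.sqrt N)) (hN2 : 2 ≤ N) (j' t : ℕ)
    (h : cfIter (Real.sqrt N) (j' + 2 + t) = cfIter (Real.sqrt N) (j' + 2)) :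
    cfIter (Real.sqrt N) (j' + 1 + t) = cfIter (Real.sqrt N) (j' + 1) := by
  have e1 : j' + 2 + t = (j' + 1 + t) + 1 := by omega
  rw [e1] at h
  rw [(PQ_main hIrr ((j'+1+t)+1)).2.1, (PQ_main hIrr (j'+2)).2.1] at h
  obtain ⟨hP1, hQ1⟩ := rep_unique hIrr (PQ_main hIrr ((j'+1+t)+1)).1 (PQ_main hIrr (j'+2)).1 h
  have hQQ1 := PQ_succ_QQ hIrr (j'+1+t)
  have hQQ2 := PQ_succ_QQ hIrr (j'+1)
  have e2 : j' + 1 + 1 = j' + 2 := by omega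
  rw [e2] at hQQ2
  have hQeq : (PQ N (j'+1+t)).2 = (PQ N (j'+1)).2 := by
    have hc : (PQ N (j'+1+t)).2 * (PQ N (j'+2)).2 = (PQ N (j'+1)).2 * (PQ N (j'+2)).2 := by
      calc (PQ N (j'+1+t)).2 * (PQ N (j'+2)).2
          = (PQ N (j'+1+t)).2 * (PQ N (j'+1+t+1)).2 := by rw [hQ1]
        _ = (N:ℤ) - (PQ N (j'+1+t+1)).1 ^ 2 := hQQ1
        _ = (N:ℤ) - (PQ N (j'+2)).1 ^ 2 := by rw [hP1]
        _ = (PQ N (j'+1)).2 * (PQ N (j'+2)).2 := hQQ2.symm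
    exact mul_right_cancel₀ (PQ_main hIrr (j'+2)).1 hc
  have ha1 := PQ_succ_eq hIrr (j'+1+t)
  have ha2 := PQ_succ_eq hIrr (j'+1)
  rw [e2] at ha2
  have hdvd : (PQ N (j'+1)).2 ∣ ((PQ N (j'+1)).1 - (PQ N (j'+1+t)).1) := by
    refine ⟨cfTerm (Real.sqrt N) (j'+1) - cfTerm (Real.sqrt N) (j'+1+t), ?_⟩
    rw [hQeq] at ha1
    rw [ha2] at hP1
    rw [ha1] at hP1
    linear_combination hP1
  have hred1 := PQ_red hIrr hN2 j'
  have hred2 := PQ_red hIrr hN2 (j'+t)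
  rw [show j' + t + 1 = j' + 1 + t from by omega] at hred2
  have hPeq : (PQ N (j'+1)).1 = (PQ N (j'+1+t)).1 := by
    have habs : |(PQ N (j'+1)).1 - (PQ N (j'+1+t)).1| < (PQ N (j'+1)).2 := by
      have b1 := hred1.2.2.1
      have b2 := hred1.2.2.2
      have b3 := hred2.2.2.1
      have b4 := hred2.2.2.2
      rw [hQeq] at b4
      rw [abs_lt]
      constructor
      · have hr : ((((PQ N (j'+1)).1 - (PQ N (j'+1+t)).1 : ℤ)) : ℝ) >
            -(((PQ N (j'+1)).2 : ℤ) : ℝ) := by push_cast; linarith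
        exact_mod_cast hr
      · have hr : ((((PQ N (j'+1)).1 - (PQ N (j'+1+t)).1 : ℤ)) : ℝ) <
            (((PQ N (j'+1)).2 : ℤ) : ℝ) := by push_cast; linarith
        exact_mod_cast hr
    have := Int.eq_zero_of_abs_lt_dvd hdvd habs
    omega
  rw [(PQ_main hIrr (j'+1+t)).2.1, (PQ_main hIrr (j'+1)).2.1, hPeq, hQeq]

lemma alpha_cycle (hIrr : Irrational (Real.sqrt N)) (hN2 : 2 ≤ N) :
    ∀ j, 1 ≤ j → cfIter (Real.sqrt N) (j + periodLen (Real.sqrt N)) = cfIter (Real.sqrt N) j := by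
  set L := periodLen (Real.sqrt N) with hLdef
  obtain ⟨hLpos, N₀, hN₀⟩ := periodLen_mem hIrr hN2
  set M := max N₀ 1 with hM
  have hM1 : 1 ≤ M := le_max_right _ _
  have base : cfIter (Real.sqrt N) (M + L) = cfIter (Real.sqrt N) M := by
    apply alpha_eq_of_term_eq hIrr (by omega) hM1
    intro m
    have := hN₀ (M + m) (le_trans (le_max_left _ _) (Nat.le_add_right _ _))
    rw [show M + L + m = M + m + L from by omega, this]
  have down : ∀ s, s ≤ M - 1 → cfIter (Real.sqrt N) ((M - s) + L) = cfIter (Real.sqrt N) (M - s) := by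
    intro s
    induction s with
    | zero => intro _; simpa using base
    | succ s ih =>
        intro hs
        have hs' : s ≤ M - 1 := by omega
        have prev := ih hs'
        have hj : 2 ≤ M - s := by omega
        have hpre : cfIter (Real.sqrt N) ((M - s - 2) + 2 + L) = cfIter (Real.sqrt N) ((M - s - 2) + 2) := by
          rw [show (M - s - 2) + 2 = M - s from by omega]
          exact prev
        have := step_back hIrr hN2 (M - s - 2) L hpre
        rw [show M - (s+1) = (M - s - 2) + 1 from by omega]
        exact this
  intro j hj
  rcases le_or_gt j M with hle | hgt
  · have := down (M - j) (by omega)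
    rw [show M - (M - j) = j from by omega] at this
    exact this
  · obtain ⟨s, rfl⟩ := Nat.exists_eq_add_of_le hgt.le
    rw [show M + s + L = (M + L) + s from by omega, cfIter_add, base, ← cfIter_add]

lemma PQ_one' (hIrr : Irrational (Real.sqrt N)) :
    PQ N 1 = (cfTerm (Real.sqrt N) 0, (N:ℤ) - cfTerm (Real.sqrt N) 0 ^ 2) := by
  have h1 : (PQ N 1).1 = cfTerm (Real.sqrt N) 0 * (PQ N 0).2 - (PQ N 0).1 := PQ_succ_eq hIrr 0
  have h2 : (PQ N 0).2 * (PQ N 1).2 = (N:ℤ) - (PQ N 1).1 ^ 2 := PQ_succ_QQ hIrr 0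
  rw [PQ_zero] at h1 h2
  simp at h1 h2
  ext
  · simp [h1]
  · simp [h2, h1]

lemma PL_QL (hIrr : Irrational (Real.sqrt N)) (hN2 : 2 ≤ N) :
    (PQ N (periodLen (Real.sqrt N))).1 = cfTerm (Real.sqrt N) 0 ∧
    (PQ N (periodLen (Real.sqrt N))).2 = 1 := by
  set L := periodLen (Real.sqrt N) with hLdef
  have hLpos := (periodLen_mem hIrr hN2).1
  have hcyc := alpha_cycle hIrr hN2 1 le_rfl
  rw [(PQ_main hIrr (1 + L)).2.1, (PQ_main hIrr 1).2.1] at hcyc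
  obtain ⟨hP1, hQ1⟩ := rep_unique hIrr (PQ_main hIrr (1 + L)).1 (PQ_main hIrr 1).1 hcyc
  have hQQ1 := PQ_succ_QQ hIrr L
  have hQQ2 := PQ_succ_QQ hIrr 0
  rw [show L + 1 = 1 + L from by omega] at hQQ1
  have hQL : (PQ N L).2 = 1 := by
    have : (PQ N L).2 * (PQ N (1 + L)).2 = (PQ N 0).2 * (PQ N (1 + L)).2 := by
      rw [hQQ1, hQ1, hQQ2, hP1]
    have := mul_right_cancel₀ (PQ_main hIrr (1 + L)).1 this
    rw [PQ_zero] at this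
    simpa using this
  refine ⟨?_, hQL⟩
  -- bounds give P_L = a0
  obtain ⟨_, _, hPub, hPlb⟩ := (show
      0 < (PQ N ((L-1)+1)).2 ∧ 0 < (PQ N ((L-1)+1)).1 ∧
      (((PQ N ((L-1)+1)).1:ℝ) < Real.sqrt N) ∧
      (Real.sqrt N - ((PQ N ((L-1)+1)).2:ℝ) < ((PQ N ((L-1)+1)).1:ℝ)) from PQ_red hIrr hN2 (L-1))
  rw [show (L-1)+1 = L from by omega] at hPub hPlb
  rw [hQL] at hPlb
  push_cast at hPlb
  have hfl : cfTerm (Real.sqrt N) 0 = ⌊Real.sqrt N⌋ := rfl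
  have h1 : ((cfTerm (Real.sqrt N) 0 : ℤ):ℝ) ≤ Real.sqrt N := hfl ▸ Int.floor_le _
  have h2 : Real.sqrt N < ((cfTerm (Real.sqrt N) 0 : ℤ):ℝ) + 1 := hfl ▸ Int.lt_floor_add_one _
  have hub : (PQ N L).1 < cfTerm (Real.sqrt N) 0 + 1 := by
    have : ((PQ N L).1 : ℝ) < ((cfTerm (Real.sqrt N) 0 + 1 : ℤ):ℝ) := by push_cast; linarith
    exact_mod_cast this
  have hlb : cfTerm (Real.sqrt N) 0 - 1 < (PQ N L).1 := by
    have : ((cfTerm (Real.sqrt N) 0 - 1 : ℤ):ℝ) < ((PQ N L).1 : ℝ) := by push_cast; linarith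
    exact_mod_cast this
  omega

lemma periodLen_dvd_of_unit (hIrr : Irrational (Real.sqrt N)) (hN2 : 2 ≤ N) {m : ℕ} (hm : 1 ≤ m)
    (hQ : (PQ N m).2 = 1) (hP : (PQ N m).1 = cfTerm (Real.sqrt N) 0) :
    periodLen (Real.sqrt N) ∣ m := by
  have halpha : cfIter (Real.sqrt N) m = (cfTerm (Real.sqrt N) 0 : ℝ) + Real.sqrt N := by
    rw [(PQ_main hIrr m).2.1, hQ, hP]
    simp
  have hstep : cfIter (Real.sqrt N) (m + 1) = cfIter (Real.sqrt N) 1 := by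
    rw [show m + 1 = m + 1 from rfl, cfIter_add _ m 1]
    show (Int.fract (cfIter (Real.sqrt N) m))⁻¹ = (Int.fract (cfIter (Real.sqrt N) 0))⁻¹
    rw [halpha]
    show (Int.fract ((cfTerm (Real.sqrt N) 0 : ℝ) + Real.sqrt N))⁻¹ = (Int.fract (Real.sqrt N))⁻¹
    rw [Int.fract_intCast_add]
  have hmem : m ∈ {t | 0 < t ∧ EvPeriod t (cfTerm (Real.sqrt N))} := by
    refine ⟨hm, 1, fun n hn => ?_⟩
    obtain ⟨s, rfl⟩ := Nat.exists_eq_add_of_le hn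
    rw [show 1 + s + m = (m + 1) + s from by omega, cfTerm_add _ (m+1) s, hstep, ← cfTerm_add]
  exact sInf_dvd_of_mem_periods hmem
/-- Continuant of a digit sequence. -/
noncomputable def Kc (b : ℕ → ℤ) : ℕ → ℤ
  | 0 => 1
  | 1 => b 0
  | (n+2) => b (n+1) * Kc b (n+1) + Kc b n

lemma Kc_zero (b : ℕ → ℤ) : Kc b 0 = 1 := rfl
lemma Kc_one (b : ℕ → ℤ) : Kc b 1 = b 0 := rfl
lemma Kc_rec (b : ℕ → ℤ) (n : ℕ) : Kc b (n+2) = b (n+1) * Kc b (n+1) + Kc b n := rfl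

lemma Kc_pos {b : ℕ → ℤ} (hb : ∀ i, 1 ≤ b i) : ∀ n, 1 ≤ Kc b n := by
  intro n
  induction n using Nat.strong_induction_on with
  | _ n ih =>
      match n with
      | 0 => exact le_refl 1 |>.trans_eq (Kc_zero b).symm
      | 1 => exact (hb 0).trans_eq (Kc_one b).symm
      | (n+2) =>
          rw [Kc_rec]
          have h1 := ih (n+1) (by omega)
          have h2 := ih n (by omega)
          nlinarith [hb (n+1)]

lemma Kc_prepend : ∀ (n : ℕ) (b : ℕ → ℤ),
    Kc b (n+2) = b 0 * Kc (fun i => b (i+1)) (n+1) + Kc (fun i => b (i+2)) n := by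
  intro n
  induction n using Nat.strong_induction_on with
  | _ n ih =>
      match n with
      | 0 => intro b; simp [Kc_rec, Kc_one, Kc_zero]; ring
      | 1 => intro b; simp [Kc_rec, Kc_one, Kc_zero]; ring
      | (n+2) =>
          intro b
          have h1 := ih (n+1) (by omega) b
          have h2 := ih n (by omega) b
          rw [Kc_rec, h1, h2]
          have e1 : Kc (fun i => b (i+1)) (n+3) =
              b (n+3) * Kc (fun i => b (i+1)) (n+2) + Kc (fun i => b (i+1)) (n+1) := Kc_rec _ (n+1)
          have e2 : Kc (fun i => b (i+2)) (n+2) =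
              b (n+3) * Kc (fun i => b (i+2)) (n+1) + Kc (fun i => b (i+2)) n := Kc_rec _ n
          rw [show n+2+1 = n+3 from rfl, e1, e2]
          ring

noncomputable def pc (N : ℕ) : ℕ → ℤ := Kc (cfTerm (Real.sqrt N))

noncomputable def qc (N : ℕ) : ℕ → ℤ
  | 0 => 0
  | (m+1) => Kc (fun i => cfTerm (Real.sqrt N) (i+1)) m

lemma pc_zero : pc N 0 = 1 := rfl
lemma pc_one : pc N 1 = cfTerm (Real.sqrt N) 0 := rfl
lemma pc_rec (k : ℕ) : pc N (k+2) = cfTerm (Real.sqrt N) (k+1) * pc N (k+1) + pc N k := rfl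
lemma qc_zero : qc N 0 = 0 := rfl
lemma qc_one : qc N 1 = 1 := rfl
lemma qc_succ (m : ℕ) : qc N (m+1) = Kc (fun i => cfTerm (Real.sqrt N) (i+1)) m := rfl

lemma qc_rec (k : ℕ) : qc N (k+2) = cfTerm (Real.sqrt N) (k+1) * qc N (k+1) + qc N k := by
  match k with
  | 0 =>
      have h : qc N 2 = cfTerm (Real.sqrt N) 1 := Kc_one (fun i => cfTerm (Real.sqrt N) (i+1))
      rw [h, qc_one, qc_zero]; ring
  | (k+1) => exact Kc_rec (fun i => cfTerm (Real.sqrt N) (i+1)) k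

lemma qc_pos (hIrr : Irrational (Real.sqrt N)) (m : ℕ) : 1 ≤ qc N (m+1) := by
  show 1 ≤ Kc _ m
  exact Kc_pos (fun i => cfTerm_pos hIrr i) m

lemma cfIter_expand (hIrr : Irrational (Real.sqrt N)) (k : ℕ) :
    cfIter (Real.sqrt N) k = (cfTerm (Real.sqrt N) k : ℝ) + (cfIter (Real.sqrt N) (k+1))⁻¹ := by
  rw [cfIter_succ, inv_inv, cfTerm]
  linarith [Int.floor_add_fract (cfIter (Real.sqrt N) k)]

lemma cfIter_pos_ne (hIrr : Irrational (Real.sqrt N)) (k : ℕ) :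
    cfIter (Real.sqrt N) (k+1) ≠ 0 :=
  ne_of_gt (lt_trans one_pos (cfIter_gt_one hIrr k))

lemma keyrel (hIrr : Irrational (Real.sqrt N)) : ∀ k,
    Real.sqrt N * ((qc N (k+1) : ℝ) * cfIter (Real.sqrt N) (k+1) + (qc N k : ℝ)) =
      (pc N (k+1) : ℝ) * cfIter (Real.sqrt N) (k+1) + (pc N k : ℝ) := by
  intro k
  induction k with
  | zero =>
      rw [qc_one, qc_zero, pc_one, pc_zero]
      have h0 : cfIter (Real.sqrt N) 1 = (Int.fract (Real.sqrt N))⁻¹ := rfl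
      have hfr : Int.fract (Real.sqrt N) = Real.sqrt N - (cfTerm (Real.sqrt N) 0 : ℝ) := by
        rw [Int.fract, cfTerm]; rfl
      have hne : Real.sqrt N - (cfTerm (Real.sqrt N) 0 : ℝ) ≠ 0 := by
        rw [← hfr]
        exact ne_of_gt (fract_pos_of_irrational hIrr)
      rw [h0, hfr]
      push_cast
      field_simp
      ring
  | succ k ih =>
      have hne := cfIter_pos_ne hIrr (k+1)
      rw [cfIter_expand hIrr (k+1)] at ih
      rw [pc_rec, qc_rec]
      push_cast
      push_cast at ih
      field_simp at ih ⊢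
      ring_nf
      ring_nf at ih
      linear_combination ih

lemma sqrt_lin_zero (hIrr : Irrational (Real.sqrt N)) {A B : ℤ}
    (h : (A:ℝ) + (B:ℝ) * Real.sqrt N = 0) : A = 0 ∧ B = 0 := by
  have hB : B = 0 := by
    by_contra hB
    have hBR : (B:ℝ) ≠ 0 := Int.cast_ne_zero.mpr hB
    have : Real.sqrt N = ((-A : ℤ):ℝ) / ((B : ℤ):ℝ) := by
      push_cast
      field_simp
      linarith
    have h2 : Real.sqrt N = (((-A : ℤ) : ℚ) / ((B : ℤ) : ℚ) : ℚ) := by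
      rw [this]; push_cast; ring
    exact (Rat.not_irrational _) (h2 ▸ hIrr)
  refine ⟨?_, hB⟩
  rw [hB] at h
  push_cast at h
  exact_mod_cast (by linarith : (A:ℝ) = 0)

lemma pell_det (hIrr : Irrational (Real.sqrt N)) : ∀ m,
    pc N (m+1) * qc N m - pc N m * qc N (m+1) = (-1)^(m+1) := by
  intro m
  induction m with
  | zero => rw [pc_one, pc_zero, qc_zero, qc_one]; ring
  | succ m ih =>
      show pc N (m+2) * qc N (m+1) - pc N (m+1) * qc N (m+2) = (-1)^(m+2)
      rw [pc_rec m, qc_rec m]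
      rw [show ((-1:ℤ))^(m+2) = -(-1)^(m+1) from by ring, ← ih]
      ring

lemma pell_eq (hIrr : Irrational (Real.sqrt N)) (hN2 : 2 ≤ N) (m : ℕ) :
    pc N (m+1)^2 - (N:ℤ) * qc N (m+1)^2 = (-1)^(m+1) * (PQ N (m+1)).2 := by
  have hs : Real.sqrt N * Real.sqrt N = (N:ℝ) := Real.mul_self_sqrt (by positivity)
  have hQ : (PQ N (m+1)).2 ≠ 0 := (PQ_main hIrr (m+1)).1
  have hQR : ((PQ N (m+1)).2 : ℝ) ≠ 0 := Int.cast_ne_zero.mpr hQ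
  have hrepQ : ((PQ N (m+1)).2 : ℝ) * cfIter (Real.sqrt N) (m+1) =
      ((PQ N (m+1)).1 : ℝ) + Real.sqrt N := by
    rw [(PQ_main hIrr (m+1)).2.1]
    field_simp
  have key := keyrel hIrr m
  have key2 : Real.sqrt N * ((qc N (m+1) : ℝ) * (((PQ N (m+1)).2 : ℝ) * cfIter (Real.sqrt N) (m+1))
        + (qc N m : ℝ) * ((PQ N (m+1)).2 : ℝ)) =
      (pc N (m+1) : ℝ) * (((PQ N (m+1)).2 : ℝ) * cfIter (Real.sqrt N) (m+1))
        + (pc N m : ℝ) * ((PQ N (m+1)).2 : ℝ) := by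
    linear_combination ((PQ N (m+1)).2 : ℝ) * key
  rw [hrepQ] at key2
  have heq : ((pc N (m+1) * (PQ N (m+1)).1 + pc N m * (PQ N (m+1)).2 - N * qc N (m+1) : ℤ):ℝ)
      + ((pc N (m+1) - qc N (m+1) * (PQ N (m+1)).1 - qc N m * (PQ N (m+1)).2 : ℤ):ℝ) * Real.sqrt N
      = 0 := by
    push_cast
    linear_combination (qc N (m+1) : ℝ) * hs - key2
  obtain ⟨hA, hB⟩ := sqrt_lin_zero hIrr heq
  have E1 : pc N (m+1) * (PQ N (m+1)).1 + pc N m * (PQ N (m+1)).2 = (N:ℤ) * qc N (m+1) := by linarith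
  have E2 : pc N (m+1) = qc N (m+1) * (PQ N (m+1)).1 + qc N m * (PQ N (m+1)).2 := by linarith
  have hdet := pell_det hIrr m
  calc pc N (m+1)^2 - (N:ℤ) * qc N (m+1)^2
      = pc N (m+1) * pc N (m+1) - ((N:ℤ) * qc N (m+1)) * qc N (m+1) := by ring
    _ = pc N (m+1) * (qc N (m+1) * (PQ N (m+1)).1 + qc N m * (PQ N (m+1)).2)
        - (pc N (m+1) * (PQ N (m+1)).1 + pc N m * (PQ N (m+1)).2) * qc N (m+1) := by
          rw [← E2, ← E1]
    _ = (pc N (m+1) * qc N m - pc N m * qc N (m+1)) * (PQ N (m+1)).2 := by ring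
    _ = (-1)^(m+1) * (PQ N (m+1)).2 := by rw [hdet]

end Surd

lemma conv_eq : ∀ (n : ℕ) (ξ : ℝ) (b : ℕ → ℤ),
    (∀ m, cfTerm ξ m = b m) → (∀ m, 1 ≤ b m) → (∀ m, Irrational (cfIter ξ m)) →
    Real.convergent ξ n = ((Kc b (n+1) : ℚ)) / ((Kc (fun i => b (i+1)) n : ℚ)) := by
  intro n
  induction n with
  | zero =>
      intro ξ b hb _ _
      rw [Real.convergent_zero]
      have h0 : ⌊ξ⌋ = b 0 := hb 0
      rw [h0]
      rw [Kc_one, Kc_zero]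
      simp
  | succ n ih =>
      intro ξ b hb h1 hirr
      rw [Real.convergent_succ]
      have hb' : ∀ m, cfTerm ((Int.fract ξ)⁻¹) m = b (m+1) := by
        intro m
        have h2 : (Int.fract ξ)⁻¹ = cfIter ξ 1 := rfl
        rw [h2, ← cfTerm_add, Nat.add_comm]
        exact hb (m+1)
      have hirr' : ∀ m, Irrational (cfIter ((Int.fract ξ)⁻¹) m) := by
        intro m
        have h2 : cfIter ((Int.fract ξ)⁻¹) m = cfIter ξ (1+m) := (cfIter_add ξ 1 m).symm
        rw [h2]
        exact hirr (1+m)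
      have IH := ih (Int.fract ξ)⁻¹ (fun i => b (i+1)) hb' (fun m => h1 (m+1)) hirr'
      rw [IH]
      have hfloor : ⌊ξ⌋ = b 0 := hb 0
      rw [hfloor]
      have hp1 : (1:ℤ) ≤ Kc (fun i => b (i+1)) (n+1) := Kc_pos (fun i => h1 (i+1)) (n+1)
      have hp2 : (1:ℤ) ≤ Kc (fun i => b (i+1+1)) n := Kc_pos (fun i => h1 (i+1+1)) n
      have hpre := Kc_prepend n b
      have hne1 : ((Kc (fun i => b (i+1)) (n+1) : ℤ) : ℚ) ≠ 0 := by
        exact_mod_cast (by omega : Kc (fun i => b (i+1)) (n+1) ≠ 0)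
      have hne2 : ((Kc (fun i => b (i+1+1)) n : ℤ) : ℚ) ≠ 0 := by
        exact_mod_cast (by omega : Kc (fun i => b (i+1+1)) n ≠ 0)
      have hid : Kc b (n+2) = b 0 * Kc (fun i => b (i+1)) (n+1) + Kc (fun i => b (i+1+1)) n := hpre
      rw [hid]
      push_cast
      field_simp

section Surd2

variable {N : ℕ}

lemma conv_sqrt (hIrr : Irrational (Real.sqrt N)) (hN2 : 2 ≤ N) (n : ℕ) :
    Real.convergent (Real.sqrt N) n = ((pc N (n+1) : ℚ)) / ((qc N (n+1) : ℚ)) := by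
  have hdig : ∀ m, 1 ≤ cfTerm (Real.sqrt N) m := by
    intro m
    match m with
    | 0 => exact cfTerm_zero_pos hIrr hN2
    | (m+1) => exact cfTerm_pos hIrr m
  exact conv_eq n (Real.sqrt N) (cfTerm (Real.sqrt N)) (fun _ => rfl) hdig (cfIter_irr hIrr)

lemma P_of_Q_one (hIrr : Irrational (Real.sqrt N)) (hN2 : 2 ≤ N) (m : ℕ)
    (hq : (PQ N (m+1)).2 = 1) : (PQ N (m+1)).1 = cfTerm (Real.sqrt N) 0 := by
  obtain ⟨_, _, hPub, hPlb⟩ := PQ_red hIrr hN2 m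
  rw [hq] at hPlb
  push_cast at hPlb
  have hfl : cfTerm (Real.sqrt N) 0 = ⌊Real.sqrt N⌋ := rfl
  have h1 : ((cfTerm (Real.sqrt N) 0 : ℤ):ℝ) ≤ Real.sqrt N := hfl ▸ Int.floor_le _
  have h2 : Real.sqrt N < ((cfTerm (Real.sqrt N) 0 : ℤ):ℝ) + 1 := hfl ▸ Int.lt_floor_add_one _
  have hub : (PQ N (m+1)).1 < cfTerm (Real.sqrt N) 0 + 1 := by
    have hr : ((PQ N (m+1)).1 : ℝ) < ((cfTerm (Real.sqrt N) 0 + 1 : ℤ):ℝ) := by push_cast; linarith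
    exact_mod_cast hr
  have hlb : cfTerm (Real.sqrt N) 0 - 1 < (PQ N (m+1)).1 := by
    have hr : ((cfTerm (Real.sqrt N) 0 - 1 : ℤ):ℝ) < ((PQ N (m+1)).1 : ℝ) := by push_cast; linarith
    exact_mod_cast hr
  omega

theorem odd_to_pell (hIrr : Irrational (Real.sqrt N)) (hN2 : 2 ≤ N)
    (hodd : Odd (periodLen (Real.sqrt N))) :
    ∃ x y : ℤ, 0 < y ∧ x^2 - (N:ℤ)*y^2 = -1 := by
  have hLpos := (periodLen_mem hIrr hN2).1
  obtain ⟨hPL, hQL⟩ := PL_QL hIrr hN2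
  set L := periodLen (Real.sqrt N) with hL
  have hp := pell_eq hIrr hN2 (L-1)
  rw [show L - 1 + 1 = L from by omega] at hp
  rw [hQL] at hp
  refine ⟨pc N L, qc N L, ?_, ?_⟩
  · have := qc_pos hIrr (L-1)
    rw [show L - 1 + 1 = L from by omega] at this
    omega
  · rw [hp, Odd.neg_one_pow hodd]
    ring

theorem pell_to_odd (hIrr : Irrational (Real.sqrt N)) (hN2 : 2 ≤ N)
    (x y : ℤ) (hy : 0 < y) (hp : x^2 - (N:ℤ)*y^2 = -1) :
    Odd (periodLen (Real.sqrt N)) := by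
  -- normalize x
  set x' : ℤ := |x| with hx'
  have hx2 : x'^2 = x^2 := sq_abs x
  have hp' : x'^2 - (N:ℤ)*y^2 = -1 := by rw [hx2]; exact hp
  have hNy : (2:ℤ) ≤ (N:ℤ) := by exact_mod_cast hN2
  have hx'pos : 0 < x' := by nlinarith [abs_nonneg x, sq_abs x]
  -- coprimality
  have hcop : Int.gcd x' y = 1 := by
    have h1 : (Int.gcd x' y : ℤ) ∣ x' := Int.gcd_dvd_left x' y
    have h2 : (Int.gcd x' y : ℤ) ∣ y := Int.gcd_dvd_right x' y
    have h3 : (Int.gcd x' y : ℤ) ∣ (-1:ℤ) := by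
      rw [← hp']
      exact dvd_sub (dvd_pow h1 two_ne_zero) ((dvd_pow h2 two_ne_zero).mul_left _)
    have h4 : (Int.gcd x' y : ℤ) ∣ (1:ℤ) := by
      have := (dvd_neg (α := ℤ)).mpr h3
      simpa using this
    have h5 := Int.le_of_dvd one_pos h4
    have h0 : 0 < Int.gcd x' y := Int.gcd_pos_of_ne_zero_left y (ne_of_gt hx'pos)
    omega
  -- build the rational approximation
  set ynat : ℕ := y.toNat with hynat
  have hyn : (ynat : ℤ) = y := Int.toNat_of_nonneg hy.le
  have hden_nz : ynat ≠ 0 := by omega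
  have hredcop : x'.natAbs.Coprime ynat := by
    have h2 : y.natAbs = ynat := by omega
    show Nat.gcd x'.natAbs ynat = 1
    rw [← h2]
    exact hcop
  set q : ℚ := Rat.mk' x' ynat hden_nz hredcop with hqdef
  have hq_num : q.num = x' := rfl
  have hq_den : q.den = ynat := rfl
  have hYpos : (0:ℝ) < (y:ℝ) := by exact_mod_cast hy
  have hY1 : (1:ℝ) ≤ (y:ℝ) := by exact_mod_cast hy
  have hXpos : (0:ℝ) < (x':ℝ) := by exact_mod_cast hx'pos
  have hqR : (q : ℝ) = (x' : ℝ) / (y : ℝ) := by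
    rw [Rat.cast_def, hq_num, hq_den]
    congr 1
    exact_mod_cast congrArg (fun z : ℤ => (z:ℝ)) hyn
  have hS2 : Real.sqrt N ^ 2 = (N:ℝ) := Real.sq_sqrt (by positivity)
  have hS1 : 1 < Real.sqrt N := sqrt_pos' hN2
  have hXY : ((x':ℝ))^2 = (N:ℝ)*(y:ℝ)^2 - 1 := by
    have hZ : (x')^2 = (N:ℤ)*y^2 - 1 := by linarith
    exact_mod_cast congrArg (fun z : ℤ => (z:ℝ)) hZ
  have hNR : (2:ℝ) ≤ (N:ℝ) := by exact_mod_cast hN2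
  have hXltSY : (x':ℝ) < Real.sqrt N * y := by
    have h1 : ((x':ℝ))^2 < (Real.sqrt N * y)^2 := by
      rw [mul_pow, hS2]
      nlinarith [hYpos]
    exact lt_of_pow_lt_pow_left₀ 2 (by positivity) h1
  have hYleX : (y:ℝ) ≤ (x':ℝ) := by
    have h1 : ((y:ℝ))^2 ≤ (x':ℝ)^2 := by rw [hXY]; nlinarith
    exact le_of_pow_le_pow_left₀ two_ne_zero (le_of_lt hXpos) h1
  have hprod : (Real.sqrt N * y - x') * (Real.sqrt N * y + x') = 1 := by
    linear_combination (y:ℝ)^2 * hS2 - hXY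
  have hsumpos : (0:ℝ) < Real.sqrt N * y + x' := by
    have := mul_pos (lt_trans one_pos hS1) hYpos
    linarith
  have hdiffpos : (0:ℝ) < Real.sqrt N * y - x' := by nlinarith [hprod, hsumpos]
  have e1 : Real.sqrt N - (x':ℝ)/(y:ℝ) = (Real.sqrt N * y - x')/(y:ℝ) := by
    field_simp
  have habs : |Real.sqrt N - (q:ℝ)| < 1/(2*((q.den:ℕ):ℝ)^2) := by
    have hdencast : ((q.den : ℕ) : ℝ) = (y:ℝ) := by
      rw [hq_den]
      exact_mod_cast congrArg (fun z : ℤ => (z:ℝ)) hyn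
    rw [hqR, hdencast]
    have hgt : 0 < Real.sqrt N - (x':ℝ)/(y:ℝ) := by
      rw [e1]; exact div_pos hdiffpos hYpos
    rw [abs_of_pos hgt, e1, div_lt_div_iff₀ hYpos (by positivity)]
    have hsum2 : 2*(y:ℝ) < Real.sqrt N * y + x' := by nlinarith [hS1, hY1, hYleX]
    have key := mul_pos hYpos (mul_pos hdiffpos (show (0:ℝ) < Real.sqrt N * y + x' - 2*y by linarith))
    nlinarith [key, hprod]
  obtain ⟨n, hn⟩ := Real.exists_rat_eq_convergent habs
  rw [conv_sqrt hIrr hN2 n] at hn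
  have hqcpos : 0 < qc N (n+1) := by linarith [qc_pos hIrr n]
  have hqcne : ((qc N (n+1) : ℤ):ℚ) ≠ 0 := by exact_mod_cast ne_of_gt hqcpos
  have hynQ : ((ynat : ℚ)) = ((y : ℤ) : ℚ) := by exact_mod_cast congrArg (fun z : ℤ => (z:ℚ)) hyn
  have hyQne : ((y : ℤ) : ℚ) ≠ 0 := by
    have : (0:ℚ) < ((y:ℤ):ℚ) := by exact_mod_cast hy
    linarith
  have hcross : x' * qc N (n+1) = pc N (n+1) * y := by
    have hq2 : ((x' : ℚ)) / ((ynat : ℚ)) = (q:ℚ) := by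
      rw [hqdef]
      exact_mod_cast Rat.num_div_den q
    rw [hn] at hq2
    rw [hynQ] at hq2
    rw [div_eq_div_iff hyQne hqcne] at hq2
    exact_mod_cast hq2
  have hdet := pell_det hIrr n
  have hqx : IsCoprime y x' := by
    rw [Int.isCoprime_iff_gcd_eq_one, Int.gcd_comm]
    exact hcop
  have hydvd : y ∣ qc N (n+1) := by
    have hmul : y ∣ x' * qc N (n+1) := ⟨pc N (n+1), by linarith [hcross]⟩
    exact hqx.dvd_of_dvd_mul_left hmul
  have hqp : IsCoprime (qc N (n+1)) (pc N (n+1)) := by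
    rcases Nat.even_or_odd (n+1) with he | ho
    · refine ⟨-(pc N n), qc N n, ?_⟩
      rw [Even.neg_one_pow he] at hdet
      linear_combination hdet
    · refine ⟨pc N n, -(qc N n), ?_⟩
      rw [Odd.neg_one_pow ho] at hdet
      linear_combination -hdet
  have hqcdvd : qc N (n+1) ∣ y := by
    have hmul : qc N (n+1) ∣ pc N (n+1) * y := ⟨x', by linarith [hcross]⟩
    exact hqp.dvd_of_dvd_mul_left hmul
  have hyeq : y = qc N (n+1) := Int.dvd_antisymm hy.le (le_of_lt hqcpos) hydvd hqcdvd
  have hxeq : x' = pc N (n+1) := by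
    have h2 : x' * qc N (n+1) = pc N (n+1) * qc N (n+1) := by rw [hcross, hyeq]
    exact mul_right_cancel₀ (by exact_mod_cast ne_of_gt hqcpos) h2
  have hpq := pell_eq hIrr hN2 n
  rw [← hxeq, ← hyeq] at hpq
  have hQpos := (PQ_red hIrr hN2 n).1
  have hkey : Odd (n+1) ∧ (PQ N (n+1)).2 = 1 := by
    rcases Nat.even_or_odd (n+1) with he | ho
    · exfalso
      rw [Even.neg_one_pow he] at hpq
      omega
    · refine ⟨ho, ?_⟩
      rw [Odd.neg_one_pow ho] at hpq
      omega
  obtain ⟨hoddn, hQ1⟩ := hkey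
  have hdvdL := periodLen_dvd_of_unit hIrr hN2 (Nat.le_add_left 1 n) hQ1 (P_of_Q_one hIrr hN2 n hQ1)
  obtain ⟨c, hc⟩ := hdvdL
  rcases Nat.even_or_odd (periodLen (Real.sqrt N)) with he | ho
  · exfalso
    rw [hc] at hoddn
    exact (Nat.not_odd_iff_even.mpr (he.mul_right c)) hoddn
  · exact ho

end Surd2

/-- If `D(√d)` is even then `D(n √d)` is even for every positive integer `n`. -/
theorem stmt2 (d : ℕ) (hd : 0 < d) (hsq : ¬ IsSquare d)
    (h : Even (periodLen (Real.sqrt d))) :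
    ∀ n : ℕ, 0 < n → Even (periodLen ((n : ℝ) * Real.sqrt d)) := by
  intro n hn
  have hd2 : 2 ≤ d := by
    rcases Nat.lt_or_ge d 2 with h1 | h2
    · have hd1 : d = 1 := by omega
      exact absurd (hd1 ▸ ⟨1, rfl⟩ : IsSquare d) hsq
    · exact h2
  have hIrrd : Irrational (Real.sqrt d) := irrational_sqrt_natCast_iff.mpr hsq
  set M : ℕ := n^2 * d with hM
  have hMcast : ((M:ℕ):ℝ) = ((n:ℝ))^2 * ((d:ℕ):ℝ) := by rw [hM]; push_cast; ring
  have hsqrtM : Real.sqrt M = (n:ℝ) * Real.sqrt d := by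
    rw [hMcast, Real.sqrt_mul (sq_nonneg _), Real.sqrt_sq (by positivity : (0:ℝ) ≤ (n:ℝ))]
  have hIrrM : Irrational (Real.sqrt M) := by
    rw [hsqrtM]
    exact hIrrd.natCast_mul (by omega)
  have hM2 : 2 ≤ M := by
    have h1 : 1 ≤ n^2 := by nlinarith
    calc 2 ≤ d := hd2
    _ = 1 * d := (one_mul d).symm
    _ ≤ n^2 * d := Nat.mul_le_mul_right d h1
  rw [← hsqrtM]
  by_contra hodd
  have hoddM : Odd (periodLen (Real.sqrt M)) := Nat.not_even_iff_odd.mp hodd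
  obtain ⟨x, y, hy, hpell⟩ := odd_to_pell hIrrM hM2 hoddM
  have hpelld : x^2 - (d:ℤ)*((n:ℤ)*y)^2 = -1 := by
    rw [← hpell, hM]
    push_cast
    ring
  have hnypos : 0 < (n:ℤ)*y := mul_pos (by exact_mod_cast hn) hy
  have hodd_d := pell_to_odd hIrrd hd2 x ((n:ℤ)*y) hnypos hpelld
  exact (Nat.not_odd_iff_even.mpr h) hodd_d
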